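/- Let A be a ring with property (SF) which satisfies the strong rank condition. Let N be a free A-module and M ≤ N a submodule such that at least one of M or N is finitely generated. Then there exists a unique submodule L of N such that the extension M ≤ L is algebraic and L is a free factor of N. -/

import Mathlib

universe u v

/-- Property (SF): every submodule of every free `A`-module is a free `A`-module. -/
def HasSF (A : Type u) [Ring A] : Prop :=
  ∀ (M : Type v) [AddCommGroup M] [Module A M], Module.Free A M →
    ∀ N : Submodule A M, Module.Free A ↥N

/-- `M` is a free factor of `N` (written `M ≤* N`): `M ≤ N` and there is a submodule
`M' ≤ N` with `M ⊓ M' = ⊥` and `M ⊔ M' = N` such that `M'` is a free module. -/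
def IsFreeFactor {A : Type*} [Ring A] {P : Type*} [AddCommGroup P] [Module A P]
    (M N : Submodule A P) : Prop :=
  M ≤ N ∧ ∃ M' : Submodule A P, M' ≤ N ∧ M ⊓ M' = ⊥ ∧ M ⊔ M' = N ∧ Module.Free A ↥M'

/-- The extension `M ≤ N` is algebraic: the only submodule `L` with `M ≤ L ≤ N`
which is a free factor of `N` is `L = N`. -/
def IsAlgExt {A : Type*} [Ring A] {P : Type*} [AddCommGroup P] [Module A P]
    (M N : Submodule A P) : Prop :=
  M ≤ N ∧ ∀ L : Submodule A P, M ≤ L → IsFreeFactor L N → L = N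

section Aux

variable {A : Type u} [Ring A] {N : Type v} [AddCommGroup N] [Module A N] [Module.Free A N]

/-- A free module of rank zero is subsingleton. -/
lemma aux_subsingleton_of_rank_zero [StrongRankCondition A] {P : Type v} [AddCommGroup P] [Module A P]
    [Module.Free A P] (h : Module.rank A P = 0) : Subsingleton P := by
  have b := Module.Free.chooseBasis A P
  rw [← b.mk_eq_rank'', Cardinal.mk_eq_zero_iff] at h
  haveI : IsEmpty (Module.Free.ChooseBasisIndex A P) := h
  haveI : Unique (Module.Free.ChooseBasisIndex A P →₀ A) := Finsupp.uniqueOfLeft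
  exact b.repr.toEquiv.subsingleton

/-- Transitivity of free factors up to the top, using (SF) for freeness of complements. -/
lemma aux_ff_trans (hSF : HasSF.{u, v} A) {L'' L : Submodule A N}
    (h1 : IsFreeFactor L'' L) (h2 : IsFreeFactor L (⊤ : Submodule A N)) :
    IsFreeFactor L'' (⊤ : Submodule A N) := by
  obtain ⟨h''L, D, hDL, hinf1, hsup1, -⟩ := h1
  obtain ⟨-, C, -, hinf2, hsup2, -⟩ := h2
  refine ⟨le_top, D ⊔ C, le_top, ?_, by rw [← sup_assoc, hsup1, hsup2],
    hSF N inferInstance _⟩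
  rw [eq_bot_iff]
  rintro x hx
  obtain ⟨hx'', hxDC⟩ := Submodule.mem_inf.1 hx
  obtain ⟨d, hd, c, hc, rfl⟩ := Submodule.mem_sup.1 hxDC
  have hcL : c ∈ L := by
    have h₁ : d + c ∈ L := h''L hx''
    have h₂ : d ∈ L := hDL hd
    simpa using L.sub_mem h₁ h₂
  have hc0 : c = 0 := by
    have : c ∈ L ⊓ C := Submodule.mem_inf.2 ⟨hcL, hc⟩
    rw [hinf2] at this
    simpa using this
  subst hc0
  have : d + 0 ∈ L'' ⊓ D := Submodule.mem_inf.2 ⟨hx'', by simpa using hd⟩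
  rw [hinf1] at this
  simpa using this

/-- Rank additivity for an internal direct sum decomposition of a submodule. -/
lemma aux_rank_add [StrongRankCondition A] (hSF : HasSF.{u, v} A)
    {L'' D L : Submodule A N} (h'' : L'' ≤ L) (hD : D ≤ L)
    (hinf : L'' ⊓ D = ⊥) (hsup : L'' ⊔ D = L) :
    Module.rank A ↥L = Module.rank A ↥L'' + Module.rank A ↥D := by
  set p := Submodule.comap L.subtype L'' with hp
  set q := Submodule.comap L.subtype D with hq
  have hmapp : Submodule.map L.subtype p = L'' := by
    rw [hp, Submodule.map_comap_subtype, inf_eq_right.2 h'']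
  have hmapq : Submodule.map L.subtype q = D := by
    rw [hq, Submodule.map_comap_subtype, inf_eq_right.2 hD]
  have hcompl : IsCompl p q := by
    constructor
    · rw [disjoint_iff, hp, hq, ← Submodule.comap_inf, hinf, Submodule.comap_bot,
        Submodule.ker_subtype]
    · rw [codisjoint_iff]
      apply Submodule.map_injective_of_injective (Submodule.injective_subtype L)
      rw [Submodule.map_sup, hmapp, hmapq, hsup, Submodule.map_top, Submodule.range_subtype]
  have e1 : ↥p ≃ₗ[A] ↥L'' := Submodule.comapSubtypeEquivOfLe h''
  have e2 : ↥q ≃ₗ[A] ↥D := Submodule.comapSubtypeEquivOfLe hD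
  haveI : Module.Free A ↥L'' := hSF N inferInstance _
  haveI : Module.Free A ↥D := hSF N inferInstance _
  haveI : Module.Free A ↥p := Module.Free.of_equiv e1.symm
  haveI : Module.Free A ↥q := Module.Free.of_equiv e2.symm
  calc Module.rank A ↥L = Module.rank A (↥p × ↥q) :=
        ((Submodule.prodEquivOfIsCompl p q hcompl).symm.rank_eq)
    _ = Module.rank A ↥p + Module.rank A ↥q := rank_prod'
    _ = Module.rank A ↥L'' + Module.rank A ↥D := by rw [e1.rank_eq, e2.rank_eq]

/-- Key decomposition: if `L2` is a free factor of `⊤`, then `L1 ⊓ L2` is a free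
factor of `L1`, for any `L1`. -/
lemma aux_decomp (hSF : HasSF.{u, v} A) (L1 L2 : Submodule A N)
    (h2 : IsFreeFactor L2 (⊤ : Submodule A N)) : IsFreeFactor (L1 ⊓ L2) L1 := by
  obtain ⟨-, C, -, hinf, hsup, hCfree⟩ := h2
  have hcompl : IsCompl L2 C := ⟨disjoint_iff.2 hinf, codisjoint_iff.2 hsup⟩
  set π : N →ₗ[A] ↥C := Submodule.projectionOnto C L2 hcompl.symm with hπ
  set f : ↥L1 →ₗ[A] ↥C := π.comp L1.subtype with hf
  haveI : Module.Free A ↥C := hCfree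
  haveI : Module.Free A ↥(LinearMap.range f) := hSF ↥C inferInstance (LinearMap.range f)
  obtain ⟨s, hs⟩ :=
    LinearMap.exists_rightInverse_of_surjective f.rangeRestrict f.range_rangeRestrict
  set f' := f.rangeRestrict with hf'
  have hssec : ∀ y, f' (s y) = y := fun y => by
    have := LinearMap.ext_iff.1 hs y
    simpa using this
  have hker : LinearMap.ker f' = Submodule.comap L1.subtype L2 := by
    rw [hf', LinearMap.ker_rangeRestrict, hf, LinearMap.ker_comp, hπ,
      Submodule.ker_projectionOnto]
  have hsupT : LinearMap.ker f' ⊔ LinearMap.range s = ⊤ := by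
    rw [eq_top_iff]
    rintro x -
    refine Submodule.mem_sup.2 ⟨x - s (f' x), ?_, s (f' x), LinearMap.mem_range_self s _,
      by abel⟩
    rw [LinearMap.mem_ker, map_sub, hssec, sub_self]
  have hinfB : LinearMap.ker f' ⊓ LinearMap.range s = ⊥ := by
    rw [eq_bot_iff]
    rintro x hx
    obtain ⟨hxk, y, rfl⟩ := Submodule.mem_inf.1 hx
    have hy : y = 0 := by
      rw [← hssec y]
      exact LinearMap.mem_ker.1 hxk
    simp [hy]
  have h1 : Submodule.map L1.subtype (LinearMap.ker f') = L1 ⊓ L2 := by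
    rw [hker, Submodule.map_comap_subtype]
  refine ⟨inf_le_left, Submodule.map L1.subtype (LinearMap.range s),
    Submodule.map_subtype_le _ _, ?_, ?_, hSF N inferInstance _⟩
  · rw [← h1, ← Submodule.map_inf _ (Submodule.injective_subtype L1), hinfB,
      Submodule.map_bot]
  · rw [← h1, ← Submodule.map_sup, hsupT, Submodule.map_top, Submodule.range_subtype]

end Aux

theorem existsUnique_algebraicClosure {A : Type u} [Ring A] [StrongRankCondition A]
    (hSF : HasSF.{u, v} A)
    (N : Type v) [AddCommGroup N] [Module A N] [Module.Free A N]
    (M : Submodule A N) (hfg : M.FG ∨ Module.Finite A N) :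
    ∃! L : Submodule A N, IsAlgExt M L ∧ IsFreeFactor L ⊤ := by
  classical
  -- the set of candidates
  set Cand : Set (Submodule A N) :=
    {L : Submodule A N | M ≤ L ∧ IsFreeFactor L (⊤ : Submodule A N)} with hCand
  -- there is a candidate of finite rank
  obtain ⟨L0, hL0M, hL0ff, hL0rank⟩ :
      ∃ L0 : Submodule A N, M ≤ L0 ∧ IsFreeFactor L0 (⊤ : Submodule A N) ∧
        Module.rank A ↥L0 < Cardinal.aleph0 := by
    rcases hfg with hMfg | hNfin
    · obtain ⟨sgen, hs⟩ := hMfg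
      set b := Module.Free.chooseBasis A N with hb
      set t : Set (Module.Free.ChooseBasisIndex A N) :=
        ⋃ x ∈ (sgen : Set N), ((b.repr x).support : Set _) with ht
      have htfin : t.Finite := Set.Finite.biUnion sgen.finite_toSet fun x _ =>
        (b.repr x).support.finite_toSet
      refine ⟨Submodule.span A (b '' t), ?_, ⟨le_top, Submodule.span A (b '' tᶜ), le_top,
        ?_, ?_, hSF N inferInstance _⟩, ?_⟩
      · rw [← hs, Submodule.span_le]
        intro x hx
        refine Submodule.span_mono (Set.image_mono ?_) (b.mem_span_repr_support x)
        intro i hi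
        exact Set.mem_biUnion hx hi
      · exact disjoint_iff.1
          (b.linearIndependent.disjoint_span_image disjoint_compl_right)
      · rw [← Submodule.span_union, ← Set.image_union, Set.union_compl_self,
          Set.image_univ, b.span_eq]
      · haveI := Module.Finite.span_of_finite A (htfin.image b)
        exact Module.rank_lt_aleph0 A _
    · refine ⟨⊤, le_top, ⟨le_rfl, ⊥, bot_le, inf_bot_eq _, sup_bot_eq _,
        hSF N inferInstance _⟩, ?_⟩
      haveI : Module.Finite A ↥(⊤ : Submodule A N) := Module.Finite.top A N
      exact Module.rank_lt_aleph0 A _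
  -- pick a candidate of minimal rank
  obtain ⟨r, ⟨L, hLmem, hLr⟩, hmin⟩ :=
    (wellFounded_lt (α := Cardinal)).has_min
      ((fun L : Submodule A N => Module.rank A ↥L) '' Cand)
      ⟨_, ⟨L0, ⟨hL0M, hL0ff⟩, rfl⟩⟩
  obtain ⟨hML, hLff⟩ := hLmem
  have hrank_le : ∀ L' ∈ Cand, Module.rank A ↥L ≤ Module.rank A ↥L' := fun L' hL' => by
    have hLr' : Module.rank A ↥L = r := hLr
    rw [hLr']
    exact not_lt.1 (hmin _ ⟨L', hL', rfl⟩)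
  have hLfin : Module.rank A ↥L < Cardinal.aleph0 :=
    lt_of_le_of_lt (hrank_le L0 ⟨hL0M, hL0ff⟩) hL0rank
  -- L is an algebraic closure
  have halg : IsAlgExt M L := by
    refine ⟨hML, fun L'' hML'' hff => ?_⟩
    obtain ⟨hL''L, D, hDL, hinf, hsup, -⟩ := id hff
    have hffTop : IsFreeFactor L'' (⊤ : Submodule A N) := aux_ff_trans hSF hff hLff
    have hL''Cand : L'' ∈ Cand := ⟨hML'', hffTop⟩
    have hadd : Module.rank A ↥L = Module.rank A ↥L'' + Module.rank A ↥D :=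
      aux_rank_add hSF hL''L hDL hinf hsup
    have hle1 : Module.rank A ↥L ≤ Module.rank A ↥L'' := hrank_le L'' hL''Cand
    have hle2 : Module.rank A ↥L'' ≤ Module.rank A ↥L := by
      rw [hadd]; exact self_le_add_right _ _
    have heq : Module.rank A ↥L'' = Module.rank A ↥L := le_antisymm hle2 hle1
    have hD0 : Module.rank A ↥D = 0 := by
      have h' : Module.rank A ↥L'' + Module.rank A ↥D =
          Module.rank A ↥L'' + 0 := by
        rw [add_zero, ← hadd]; exact heq.symm
      exact Cardinal.eq_of_add_eq_add_left h' (lt_of_le_of_lt hle2 hLfin)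
    haveI : Module.Free A ↥D := hSF N inferInstance _
    haveI : Subsingleton ↥D := aux_subsingleton_of_rank_zero hD0
    have hDbot : D = ⊥ := Submodule.eq_bot_of_subsingleton
    rw [hDbot, sup_bot_eq] at hsup
    exact hsup
  -- main key for uniqueness
  have key : ∀ La Lb : Submodule A N, IsAlgExt M La → M ≤ Lb →
      IsFreeFactor Lb (⊤ : Submodule A N) → La ≤ Lb := by
    intro La Lb ha hMb hffb
    have hd : IsFreeFactor (La ⊓ Lb) La := aux_decomp hSF La Lb hffb
    have := ha.2 (La ⊓ Lb) (le_inf ha.1 hMb) hd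
    exact inf_eq_left.1 this
  refine ⟨L, ⟨halg, hLff⟩, ?_⟩
  rintro L2 ⟨halg2, hff2⟩
  exact le_antisymm (key L2 L halg2 hML hLff) (key L L2 halg halg2.1 hff2)
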